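/- The infinite even-integer continued fractions [b₁,…,bₙ,2,−2,2,−2,…] and [b₁,…,b_{n−1},bₙ+2,−2,2,−2,…] have the same value. -/

import Mathlib

open Filter Topology OnePoint

/-- Inverse on ℚ ∪ {∞} (`Option.none` = ∞): 1/∞ = 0 and 1/0 = ∞. -/
def cfInv : Option ℚ → Option ℚ
  | Option.none => Option.some 0
  | Option.some q => if q = 0 then Option.none else Option.some q⁻¹

/-- Value of the finite continued fraction [b₁,…,bₙ] in ℚ ∪ {∞},
with `cfVal [] = Option.none` (that is, ∞). -/
def cfVal : List ℤ → Option ℚ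
  | [] => Option.none
  | b :: t => (cfInv (cfVal t)).map (fun q => (b : ℚ) + q)

/-- Embed ℚ ∪ {∞} into the extended real line ℝ ∪ {∞}. -/
def toOP : Option ℚ → OnePoint ℝ
  | Option.none => ∞
  | Option.some q => ((q : ℝ) : OnePoint ℝ)

/-- The n-th convergent (value of the first n+1 terms) of the continued fraction
with coefficients `b 0, b 1, …`. -/
def cfConv (b : ℕ → ℤ) (n : ℕ) : Option ℚ := cfVal ((List.range (n + 1)).map b)

/-- `b 0, b 1, …` is an even-integer continued fraction. -/
def IsEICF (b : ℕ → ℤ) : Prop := (∀ i, Even (b i)) ∧ ∀ i ≥ 1, b i ≠ 0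

/-- The even-integer continued fraction `b` is an expansion of `x`:
its convergents tend to `x` in the extended real line. -/
def IsEICFExpansion (b : ℕ → ℤ) (x : OnePoint ℝ) : Prop :=
  IsEICF b ∧ Tendsto (fun n => toOP (cfConv b n)) atTop (𝓝 x)


namespace EICFaux

def gQ (M : List ℤ) (q : ℚ) : ℚ := M.foldr (fun b v => (b:ℚ) + v⁻¹) q

noncomputable def gR (M : List ℤ) (q : ℝ) : ℝ := M.foldr (fun b v => (b:ℝ) + v⁻¹) q

@[simp] lemma gQ_nil (q : ℚ) : gQ [] q = q := rfl
@[simp] lemma gQ_cons (b : ℤ) (t : List ℤ) (q : ℚ) : gQ (b :: t) q = (b:ℚ) + (gQ t q)⁻¹ := rfl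
@[simp] lemma gR_nil (q : ℝ) : gR [] q = q := rfl
@[simp] lemma gR_cons (b : ℤ) (t : List ℤ) (q : ℝ) : gR (b :: t) q = (b:ℝ) + (gR t q)⁻¹ := rfl

lemma gQ_cast (M : List ℤ) (q : ℚ) : ((gQ M q : ℚ) : ℝ) = gR M ((q:ℚ):ℝ) := by
  induction M with
  | nil => rfl
  | cons b t ih => simp [ih]

lemma int_cast_abs_le {K : Type*} [Field K] [LinearOrder K] [IsStrictOrderedRing K] {b : ℤ} (h : 2 ≤ |b|) :
    (2:K) ≤ |(b:K)| := by
  have : ((2:ℤ):K) ≤ |((b:ℤ):K)| := by rw [← Int.cast_abs]; exact_mod_cast h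
  simpa using this

lemma gQ_abs (M : List ℤ) (q : ℚ) (hM : ∀ b ∈ M, 2 ≤ |b|) (hq : 1 < |q|) : 1 < |gQ M q| := by
  induction M with
  | nil => simpa using hq
  | cons b t ih =>
    have ht : 1 < |gQ t q| := ih (fun x hx => hM x (List.mem_cons_of_mem _ hx))
    have hb : (2:ℚ) ≤ |(b:ℚ)| := int_cast_abs_le (hM b List.mem_cons_self)
    have hinv : |(gQ t q)⁻¹| < 1 := by
      rw [abs_inv, inv_lt_one_iff₀]; right; exact ht
    have htri : |(b:ℚ)| - |(gQ t q)⁻¹| ≤ |(b:ℚ) + (gQ t q)⁻¹| := by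
      have h1 := abs_add_le ((b:ℚ) + (gQ t q)⁻¹) (-(gQ t q)⁻¹)
      simp only [add_neg_cancel_right, abs_neg] at h1
      linarith
    simp only [gQ_cons]
    linarith

lemma gR_abs (M : List ℤ) (q : ℝ) (hM : ∀ b ∈ M, 2 ≤ |b|) (hq : 1 ≤ |q|) : 1 ≤ |gR M q| := by
  induction M with
  | nil => simpa using hq
  | cons b t ih =>
    have ht : 1 ≤ |gR t q| := ih (fun x hx => hM x (List.mem_cons_of_mem _ hx))
    have hb : (2:ℝ) ≤ |(b:ℝ)| := int_cast_abs_le (hM b List.mem_cons_self)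
    have hinv : |(gR t q)⁻¹| ≤ 1 := by rw [abs_inv]; exact inv_le_one_of_one_le₀ ht
    have htri : |(b:ℝ)| - |(gR t q)⁻¹| ≤ |(b:ℝ) + (gR t q)⁻¹| := by
      have h1 := abs_add_le ((b:ℝ) + (gR t q)⁻¹) (-(gR t q)⁻¹)
      simp only [add_neg_cancel_right, abs_neg] at h1
      linarith
    simp only [gR_cons]
    linarith

lemma gR_lip (M : List ℤ) (q r : ℝ) (hM : ∀ b ∈ M.tail, 2 ≤ |b|) (hq : 1 ≤ |q|)
    (hr : 1 ≤ |r|) : |gR M q - gR M r| ≤ |q - r| := by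
  induction M with
  | nil => simp
  | cons b t ih =>
    have hMt : ∀ x ∈ t, 2 ≤ |x| := by simpa using hM
    have htq : 1 ≤ |gR t q| := gR_abs t q hMt hq
    have htr : 1 ≤ |gR t r| := gR_abs t r hMt hr
    have hlip : |gR t q - gR t r| ≤ |q - r| :=
      ih (fun x hx => hMt x (List.mem_of_mem_tail hx))
    have hq0 : gR t q ≠ 0 := by intro h; rw [h, abs_zero] at htq; linarith
    have hr0 : gR t r ≠ 0 := by intro h; rw [h, abs_zero] at htr; linarith
    simp only [gR_cons, add_sub_add_left_eq_sub]
    rw [inv_sub_inv hq0 hr0, abs_div, abs_mul]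
    have h1 : (1:ℝ) ≤ |gR t q| * |gR t r| := one_le_mul_of_one_le_of_one_le htq htr
    calc |gR t r - gR t q| / (|gR t q| * |gR t r|) ≤ |gR t r - gR t q| :=
          div_le_self (abs_nonneg _) h1
      _ = |gR t q - gR t r| := abs_sub_comm _ _
      _ ≤ |q - r| := hlip

end EICFaux

namespace EICFaux2
open EICFaux

lemma cfVal_append (M N : List ℤ) (q : ℚ) (hM : ∀ b ∈ M.tail, 2 ≤ |b|) (hq : 1 < |q|)
    (hN : cfVal N = Option.some q) : cfVal (M ++ N) = Option.some (gQ M q) := by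
  induction M with
  | nil => simpa using hN
  | cons b t ih =>
    have hMt : ∀ x ∈ t, 2 ≤ |x| := by simpa using hM
    have hval : cfVal (t ++ N) = Option.some (gQ t q) :=
      ih (fun x hx => hMt x (List.mem_of_mem_tail hx))
    have hne : gQ t q ≠ 0 := by
      rcases t with _ | ⟨c, s⟩
      · simp only [gQ_nil]; intro h; rw [h, abs_zero] at hq; linarith
      · have := gQ_abs (c :: s) q hMt hq
        intro h; rw [h, abs_zero] at this; linarith
    rw [List.cons_append]
    show (cfInv (cfVal (t ++ N))).map (fun r => (b:ℚ) + r) = _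
    rw [hval]
    simp [cfInv, hne, gQ_cons]

def TL (m : ℕ) : List ℤ := (List.range m).map (fun i => if Even i then 2 else -2)
def SL (m : ℕ) : List ℤ := (List.range m).map (fun i => if Even i then -2 else 2)

lemma TL_SL_val (m : ℕ) :
    cfVal (TL (m+1)) = Option.some (((m:ℚ)+2)/((m:ℚ)+1)) ∧
    cfVal (SL (m+1)) = Option.some (-(((m:ℚ)+2)/((m:ℚ)+1))) := by
  induction m with
  | zero =>
    constructor
    · show cfVal [2] = _
      simp [cfVal, cfInv]
    · show cfVal [-2] = _
      simp [cfVal, cfInv]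
  | succ m ih =>
    have hT : TL (m+2) = 2 :: SL (m+1) := by
      simp only [TL, SL, List.range_succ_eq_map, List.map_cons, List.map_map]
      norm_num
      intro a _
      rcases Nat.even_or_odd a with h|h <;> simp [Nat.even_add_one, h, Nat.not_even_iff_odd]
    have hS : SL (m+2) = -2 :: TL (m+1) := by
      simp only [TL, SL, List.range_succ_eq_map, List.map_cons, List.map_map]
      norm_num
      intro a _
      rcases Nat.even_or_odd a with h|h <;> simp [Nat.even_add_one, h, Nat.not_even_iff_odd]
    obtain ⟨ihT, ihS⟩ := ih
    have h1 : ((m:ℚ)+2)/((m:ℚ)+1) ≠ 0 := by positivity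
    have hm1 : ((m:ℚ)+1) ≠ 0 := by positivity
    have hm2 : ((m:ℚ)+2) ≠ 0 := by positivity
    have hne : -(((m:ℚ)+2)/((m:ℚ)+1)) ≠ 0 := by simpa using h1
    constructor
    · rw [hT]
      show (cfInv (cfVal (SL (m+1)))).map (fun r => ((2:ℤ):ℚ) + r) = _
      rw [ihS]
      simp only [cfInv, if_neg hne, Option.map_some]
      congr 1
      push_cast
      rw [inv_neg, inv_div, eq_div_iff (by positivity : ((m:ℚ)+1+1) ≠ 0)]
      field_simp
      ring
    · rw [hS]
      show (cfInv (cfVal (TL (m+1)))).map (fun r => ((-2:ℤ):ℚ) + r) = _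
      rw [ihT]
      simp only [cfInv, if_neg h1, Option.map_some]
      congr 1
      push_cast
      rw [inv_div]
      field_simp
      ring

end EICFaux2

namespace EICFaux3
open EICFaux EICFaux2

lemma map_range_eq_self (L : List ℤ) (c : ℕ → ℤ) (hc : ∀ k < L.length, c k = L.getD k 0) :
    (List.range L.length).map c = L := by
  apply List.ext_getElem (by simp)
  intro i h1 h2
  have hi : i < L.length := by simpa using h1
  simp only [List.getElem_map, List.getElem_range]
  rw [hc i hi, List.getD_eq_getElem _ _ hi]

lemma map_range_split (c : ℕ → ℤ) (L : List ℤ) (n : ℕ) (hn : L.length ≤ n)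
    (hc : ∀ k < L.length, c k = L.getD k 0) :
    (List.range (n+1)).map c = L ++ (List.range (n+1-L.length)).map (fun i => c (L.length + i)) := by
  have h : n + 1 = L.length + (n + 1 - L.length) := by omega
  conv_lhs => rw [h, List.range_add]
  rw [List.map_append, List.map_map, map_range_eq_self L c hc]
  congr 1

lemma gR_bump : ∀ (L : List ℤ) (h : L ≠ []),
    gR L 1 = gR (L.dropLast ++ [L.getLast h + 2]) (-1)
  | [], h => absurd rfl h
  | [a], _ => by
    simp only [List.dropLast_singleton, List.getLast_singleton, List.nil_append, gR_cons, gR_nil]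
    push_cast
    ring
  | a :: c :: s, _ => by
    have ht : (c :: s) ≠ [] := by simp
    have h1 : (a :: c :: s).dropLast = a :: (c :: s).dropLast := List.dropLast_cons₂
    have h2 : (a :: c :: s).getLast (by simp) = (c :: s).getLast ht := List.getLast_cons ht
    rw [h1, h2, List.cons_append, gR_cons a (c :: s) 1,
      gR_cons a ((c :: s).dropLast ++ [(c :: s).getLast ht + 2]) (-1), gR_bump (c :: s) ht]

lemma bump_length (L : List ℤ) (h : L ≠ []) :
    (L.dropLast ++ [L.getLast h + 2]).length = L.length := by
  have : 1 ≤ L.length := List.length_pos_iff.mpr h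
  simp [List.length_dropLast]
  omega

lemma bump_getD (L : List ℤ) (h : L ≠ []) (k : ℕ) (hk : k < L.length) :
    (L.dropLast ++ [L.getLast h + 2]).getD k 0 =
      if k = L.length - 1 then L.getD k 0 + 2 else L.getD k 0 := by
  have hlen : L.dropLast.length = L.length - 1 := List.length_dropLast (xs := L)
  by_cases hk1 : k = L.length - 1
  · rw [if_pos hk1, List.getD_append_right _ _ _ _ (by omega),
      hlen, hk1, Nat.sub_self]
    rw [List.getLast_eq_getElem, List.getD_eq_getElem _ _ (by omega : L.length - 1 < L.length)]
    rfl
  · rw [if_neg hk1, List.getD_append _ _ _ _ (by omega)]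
    rw [List.getD_eq_getElem _ _ (by omega : k < L.dropLast.length),
      List.getD_eq_getElem _ _ hk, List.getElem_dropLast]

lemma bump_tail_bound (L : List ℤ) (h : L ≠ []) (hT : ∀ b ∈ L.tail, 2 ≤ |b|)
    (hlast2 : 2 ≤ L.length → 2 ≤ |L.getLast h + 2|) :
    ∀ b ∈ (L.dropLast ++ [L.getLast h + 2]).tail, 2 ≤ |b| := by
  rcases L with _ | ⟨a, t⟩
  · exact absurd rfl h
  rcases t with _ | ⟨c, s⟩
  · intro b hb; simp at hb
  · have ht : (c :: s) ≠ [] := by simp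
    have h1 : (a :: c :: s).dropLast = a :: (c :: s).dropLast := List.dropLast_cons₂
    have h2 : (a :: c :: s).getLast (by simp) = (c :: s).getLast ht := List.getLast_cons ht
    intro b hb
    rw [h1] at hb
    simp only [List.cons_append, List.tail_cons, List.mem_append, List.mem_singleton] at hb
    rcases hb with hb | hb
    · exact hT b (((c :: s).dropLast_sublist).subset hb)
    · rw [hb]
      exact hlast2 (by simp)

end EICFaux3

open EICFaux EICFaux2 EICFaux3

lemma even_nz_two_le {b : ℤ} (he : Even b) (hn : b ≠ 0) : 2 ≤ |b| := by
  obtain ⟨k, hk⟩ := he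
  have h2 : 2 ≤ b ∨ b ≤ -2 := by omega
  rcases h2 with h|h
  · rw [abs_of_nonneg (by omega)]; exact h
  · rw [abs_of_nonpos (by omega)]; omega

/-- The infinite even-integer continued fractions [b₁,…,bₙ,2,−2,2,−2,…] and
[b₁,…,b_{n−1},bₙ+2,−2,2,−2,…] have the same value. -/
theorem eicf_tail_two_neg_two_same_value (L : List ℤ) (hL : L ≠ [])
    (heven : ∀ b ∈ L, Even b) (hnz : ∀ b ∈ L.tail, b ≠ 0)
    (hlast : 2 ≤ L.length → L.getLast hL + 2 ≠ 0) :
    ∃ x : OnePoint ℝ,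
      Tendsto (fun n => toOP (cfConv
        (fun k => if k < L.length then L.getD k 0
          else if Even (k - L.length) then 2 else -2) n)) atTop (𝓝 x) ∧
      Tendsto (fun n => toOP (cfConv
        (fun k => if k < L.length - 1 then L.getD k 0
          else if k = L.length - 1 then L.getD k 0 + 2
          else if Even (k - L.length) then -2 else 2) n)) atTop (𝓝 x) := by
  classical
  have hlen1 : 1 ≤ L.length := List.length_pos_iff.mpr hL
  have htail : ∀ b ∈ L.tail, 2 ≤ |b| := fun b hb =>
    even_nz_two_le (heven b (List.mem_of_mem_tail hb)) (hnz b hb)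
  have hlaste : Even (L.getLast hL + 2) :=
    (heven _ (List.getLast_mem hL)).add (by decide)
  have hlast2 : 2 ≤ L.length → 2 ≤ |L.getLast hL + 2| := fun h2 =>
    even_nz_two_le hlaste (hlast h2)
  set len := L.length with hlendef
  set L' := L.dropLast ++ [L.getLast hL + 2] with hL'def
  have htail' : ∀ b ∈ L'.tail, 2 ≤ |b| := bump_tail_bound L hL htail hlast2
  have hlen' : L'.length = len := bump_length L hL
  set c1 : ℕ → ℤ := fun k => if k < len then L.getD k 0
    else if Even (k - len) then 2 else -2 with hc1def
  set c2 : ℕ → ℤ := fun k => if k < len - 1 then L.getD k 0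
    else if k = len - 1 then L.getD k 0 + 2
    else if Even (k - len) then -2 else 2 with hc2def
  set Qf : ℕ → ℚ := fun n => (((n-len:ℕ):ℚ)+2)/(((n-len:ℕ):ℚ)+1) with hQfdef
  have hQgt : ∀ n, 1 < Qf n := fun n => by
    rw [hQfdef]
    rw [one_lt_div (by positivity)]
    norm_num
  have hQabs : ∀ n, 1 < |Qf n| := fun n => lt_of_lt_of_le (hQgt n) (le_abs_self _)
  -- limit of Qf in ℝ
  have hq0 : Tendsto (fun n : ℕ => 1/(((n-len:ℕ):ℝ)+1)) atTop (𝓝 0) :=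
    tendsto_one_div_add_atTop_nhds_zero_nat.comp (Filter.tendsto_sub_atTop_nat len)
  have hq1 : Tendsto (fun n => ((Qf n : ℚ) : ℝ)) atTop (𝓝 1) := by
    have heq : ∀ n, ((Qf n : ℚ) : ℝ) = 1 + 1/(((n-len:ℕ):ℝ)+1) := by
      intro n
      rw [hQfdef]
      push_cast
      rw [one_add_div (by positivity : (((n-len:ℕ):ℝ)+1) ≠ 0)]
      ring_nf
    simp only [heq]
    have h1 := (tendsto_const_nhds :
      Tendsto (fun _ : ℕ => (1:ℝ)) atTop (𝓝 1)).add hq0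
    simpa using h1
  have hQRabs : ∀ n, (1:ℝ) ≤ |((Qf n : ℚ) : ℝ)| := fun n => by
    have : (1:ℝ) < ((Qf n : ℚ) : ℝ) := by exact_mod_cast hQgt n
    exact le_of_lt (lt_of_lt_of_le this (le_abs_self _))
  -- generic convergence of gR along a rational sequence
  have main : ∀ (M : List ℤ) (r : ℝ), (∀ b ∈ M.tail, 2 ≤ |b|) → (1:ℝ) ≤ |r| →
      ∀ (s : ℕ → ℚ), (∀ n, (1:ℝ) ≤ |((s n : ℚ) : ℝ)|) →
      Tendsto (fun n => ((s n : ℚ) : ℝ)) atTop (𝓝 r) →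
      Tendsto (fun n => gR M ((s n : ℚ) : ℝ)) atTop (𝓝 (gR M r)) := by
    intro M r hM hr s hs hts
    rw [tendsto_iff_dist_tendsto_zero]
    apply squeeze_zero (g := fun n => dist ((s n : ℚ) : ℝ) r) (fun n => dist_nonneg)
    · intro n
      rw [Real.dist_eq, Real.dist_eq]
      exact gR_lip M _ r hM (hs n) hr
    · exact tendsto_iff_dist_tendsto_zero.mp hts
  refine ⟨((gR L 1 : ℝ) : OnePoint ℝ), ?_, ?_⟩
  · -- first sequence
    have key : ∀ n, len ≤ n → toOP (cfConv c1 n) = (((gR L ((Qf n : ℚ) : ℝ)) : ℝ) : OnePoint ℝ) := by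
      intro n hn
      have hc1' : ∀ k < L.length, c1 k = L.getD k 0 := fun k hk => if_pos hk
      have hsplit := map_range_split c1 L n hn hc1'
      rw [← hlendef] at hsplit
      have htlm : (List.range (n+1-len)).map (fun i => c1 (len + i)) = TL ((n-len)+1) := by
        have hn1 : n+1-len = (n-len)+1 := by omega
        rw [hn1, TL]
        apply List.map_congr_left
        intro i _
        simp only [hc1def]
        rw [if_neg (by omega : ¬ (len + i < len)), Nat.add_sub_cancel_left]
      have hval : cfVal (L ++ TL ((n-len)+1)) = Option.some (gQ L (Qf n)) :=
        cfVal_append L (TL ((n-len)+1)) (Qf n) htail (hQabs n) (TL_SL_val (n-len)).1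
      show toOP (cfVal ((List.range (n+1)).map c1)) = _
      rw [hsplit, htlm, hval]
      show (((gQ L (Qf n) : ℚ) : ℝ) : OnePoint ℝ) = _
      rw [gQ_cast]
    have hgr : Tendsto (fun n => gR L ((Qf n : ℚ) : ℝ)) atTop (𝓝 (gR L 1)) :=
      main L 1 htail (by norm_num) Qf hQRabs hq1
    have hcoe : Tendsto (fun n => (((gR L ((Qf n : ℚ) : ℝ)) : ℝ) : OnePoint ℝ)) atTop
        (𝓝 ((gR L 1 : ℝ) : OnePoint ℝ)) := (OnePoint.continuous_coe.tendsto _).comp hgr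
    apply hcoe.congr'
    filter_upwards [eventually_ge_atTop len] with n hn
    exact (key n hn).symm
  · -- second sequence
    rw [show ((gR L 1 : ℝ) : OnePoint ℝ) = ((gR L' (-1) : ℝ) : OnePoint ℝ) by
      rw [← gR_bump L hL]]
    have key : ∀ n, len ≤ n →
        toOP (cfConv c2 n) = (((gR L' ((-(Qf n) : ℚ) : ℝ)) : ℝ) : OnePoint ℝ) := by
      intro n hn
      have hc2' : ∀ k < L'.length, c2 k = L'.getD k 0 := by
        intro k hk
        rw [hlen'] at hk
        rw [bump_getD L hL k hk]
        by_cases h1 : k = len - 1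
        · simp [hc2def, h1]; omega
        · simp [hc2def, h1, (by omega : k < len - 1)]; omega
      have hsplit := map_range_split c2 L' n (by rw [hlen']; exact hn) hc2'
      rw [hlen'] at hsplit
      have htlm : (List.range (n+1-len)).map (fun i => c2 (len + i)) = SL ((n-len)+1) := by
        have hn1 : n+1-len = (n-len)+1 := by omega
        rw [hn1, SL]
        apply List.map_congr_left
        intro i _
        simp only [hc2def]
        rw [if_neg (by omega : ¬ (len + i < len - 1)), if_neg (by omega : ¬ (len + i = len - 1)),
          Nat.add_sub_cancel_left]
      have habs : 1 < |(-(Qf n) : ℚ)| := by rw [abs_neg]; exact hQabs n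
      have hval : cfVal (L' ++ SL ((n-len)+1)) = Option.some (gQ L' (-(Qf n))) :=
        cfVal_append L' (SL ((n-len)+1)) (-(Qf n)) htail' habs (TL_SL_val (n-len)).2
      show toOP (cfVal ((List.range (n+1)).map c2)) = _
      rw [hsplit, htlm, hval]
      show (((gQ L' (-(Qf n)) : ℚ) : ℝ) : OnePoint ℝ) = _
      rw [gQ_cast]
    have hq1' : Tendsto (fun n => ((-(Qf n) : ℚ) : ℝ)) atTop (𝓝 (-1)) := by
      simp only [Rat.cast_neg]
      exact hq1.neg
    have hQRabs' : ∀ n, (1:ℝ) ≤ |((-(Qf n) : ℚ) : ℝ)| := fun n => by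
      rw [Rat.cast_neg, abs_neg]; exact hQRabs n
    have hgr : Tendsto (fun n => gR L' ((-(Qf n) : ℚ) : ℝ)) atTop (𝓝 (gR L' (-1))) :=
      main L' (-1) htail' (by norm_num) (fun n => -(Qf n)) hQRabs' hq1'
    have hcoe : Tendsto (fun n => (((gR L' ((-(Qf n) : ℚ) : ℝ)) : ℝ) : OnePoint ℝ)) atTop
        (𝓝 ((gR L' (-1) : ℝ) : OnePoint ℝ)) := (OnePoint.continuous_coe.tendsto _).comp hgr
    apply hcoe.congr'
    filter_upwards [eventually_ge_atTop len] with n hn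
    exact (key n hn).symm
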